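/- Let A be a real M×N matrix in which every row has exactly one entry equal to +1, exactly one entry equal to −1, and all other entries equal to 0; let L = AᵀA, d_max = max_i L_{ii}; let σ > 0, ν > 0, γ = σ²/ν², and τ > 0 with τ ≤ 1/(d_max + γ). Let Q = (1 − τγ)I − τL, w = τAᵀb + τγx₀, x[0] = x₀, x[t+1] = Q x[t] + w, and x* = (L + γI)⁻¹(Aᵀb + γx₀). Then the convergence is exponential with rate 1 − τγ: for every t ≥ 0, ‖x[t] − x*‖₂ ≤ (1 − τγ)ᵗ ‖x₀ − x*‖₂. -/

import Mathlib

open Matrix Finset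

/-- Under the standing assumption `τ ≤ 1/(d_max + γ)` (with `γ = σ²/ν²`),
the iteration converges exponentially with rate `1 − τγ`:
`‖x[t] − x*‖₂ ≤ (1 − τγ)ᵗ ‖x₀ − x*‖₂` for all `t ≥ 0`. -/
theorem stmt_5 {M N : ℕ} (A : Matrix (Fin M) (Fin N) ℝ)
    (hA : ∀ e : Fin M, ∃ i j : Fin N, i ≠ j ∧ A e i = 1 ∧ A e j = -1 ∧
        ∀ k, k ≠ i → k ≠ j → A e k = 0)
    (L : Matrix (Fin N) (Fin N) ℝ) (hL : L = Aᵀ * A)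
    (dmax : ℝ) (hdmax : IsGreatest (Set.range fun i => L i i) dmax)
    (σ ν γ τ : ℝ) (hσ : 0 < σ) (hν : 0 < ν) (hγ : γ = σ ^ 2 / ν ^ 2)
    (hτ : 0 < τ) (hτle : τ ≤ 1 / (dmax + γ))
    (Q : Matrix (Fin N) (Fin N) ℝ)
    (hQ : Q = (1 - τ * γ) • (1 : Matrix (Fin N) (Fin N) ℝ) - τ • L)
    (b : Fin M → ℝ) (x₀ : Fin N → ℝ) (w : Fin N → ℝ)
    (hw : w = τ • Aᵀ.mulVec b + (τ * γ) • x₀)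
    (x : ℕ → Fin N → ℝ) (hx0 : x 0 = x₀)
    (hx : ∀ t : ℕ, x (t + 1) = Q.mulVec (x t) + w)
    (xstar : Fin N → ℝ)
    (hxstar : xstar =
      (L + γ • (1 : Matrix (Fin N) (Fin N) ℝ))⁻¹.mulVec (Aᵀ.mulVec b + γ • x₀)) :
    ∀ t : ℕ, Real.sqrt (∑ i, (x t i - xstar i) ^ 2) ≤
      (1 - τ * γ) ^ t * Real.sqrt (∑ i, (x₀ i - xstar i) ^ 2) := by
  have hγpos : 0 < γ := hγ ▸ div_pos (pow_pos hσ 2) (pow_pos hν 2)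
  -- basic facts about entries of A
  have hA01 : ∀ e k, |A e k| * A e k = A e k := by
    intro e k
    obtain ⟨i, j, hij, h1, h2, h0⟩ := hA e
    rcases eq_or_ne k i with rfl | hki
    · rw [h1]; norm_num
    rcases eq_or_ne k j with rfl | hkj
    · rw [h2]; norm_num
    · rw [h0 k hki hkj]; norm_num
  have hrow : ∀ e, ∑ k, A e k ^ 2 = 2 := by
    intro e
    obtain ⟨i, j, hij, h1, h2, h0⟩ := hA e
    have hsub : ∑ k, A e k ^ 2 = ∑ k ∈ ({i, j} : Finset (Fin N)), A e k ^ 2 := by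
      refine (Finset.sum_subset (Finset.subset_univ _) ?_).symm
      intro k _ hk
      simp only [Finset.mem_insert, Finset.mem_singleton, not_or] at hk
      rw [h0 k hk.1 hk.2]; ring
    rw [hsub, Finset.sum_pair hij, h1, h2]; norm_num
  have hdiag : ∀ i, L i i = ∑ e, A e i ^ 2 := by
    intro i
    rw [hL]
    simp only [Matrix.mul_apply, Matrix.transpose_apply, sq]
  have hLd : ∀ i, ∑ e, A e i ^ 2 ≤ dmax := by
    intro i
    have := hdmax.2 (Set.mem_range_self i)
    rwa [hdiag] at this
  have hd0 : 0 ≤ dmax := by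
    obtain ⟨i, hi⟩ := hdmax.1
    have hi' : L i i = dmax := hi
    rw [hdiag] at hi'
    rw [← hi']
    positivity
  have hτγ1 : τ * dmax ≤ 1 - τ * γ := by
    have hpos : 0 < dmax + γ := by linarith
    have h1 : τ * (dmax + γ) ≤ 1 := by
      rw [le_div_iff₀ hpos] at hτle; exact hτle
    nlinarith
  have h1τγ : 0 ≤ 1 - τ * γ := by nlinarith [mul_nonneg hτ.le hd0]
  -- positive definiteness of L + γ I
  have hconj : Aᴴ = Aᵀ := by ext i j; simp [Matrix.conjTranspose_apply]
  have hsd : (Aᵀ * A).PosSemidef := by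
    have := Matrix.posSemidef_conjTranspose_mul_self A
    rwa [hconj] at this
  have hpd : (L + γ • (1 : Matrix (Fin N) (Fin N) ℝ)).PosDef := by
    refine Matrix.PosDef.of_dotProduct_mulVec_pos ?_ ?_
    · rw [hL]
      have hLh : (Aᵀ * A).IsHermitian := hconj ▸ Matrix.isHermitian_conjTranspose_mul_self A
      show _ᴴ = _
      rw [Matrix.conjTranspose_add, hLh, Matrix.conjTranspose_smul,
        Matrix.conjTranspose_one, star_trivial]
    · intro v hv
      have hsv : star v = v := star_trivial v
      rw [hsv, Matrix.add_mulVec, Matrix.smul_mulVec, Matrix.one_mulVec,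
        dotProduct_add, dotProduct_smul]
      have h1 : 0 ≤ v ⬝ᵥ (L *ᵥ v) := by
        have := hsd.dotProduct_mulVec_nonneg v; rw [star_trivial] at this; rw [hL]; exact this
      have h2 : 0 < v ⬝ᵥ v := by
        obtain ⟨i, hi⟩ := Function.ne_iff.mp hv
        have hp : 0 < ∑ j, v j * v j :=
          Finset.sum_pos' (fun j _ => mul_self_nonneg _)
            ⟨i, Finset.mem_univ i, mul_self_pos.mpr hi⟩
        simpa [dotProduct] using hp
      have h3 : 0 < γ • (v ⬝ᵥ v) := by
        rw [smul_eq_mul]; exact mul_pos hγpos h2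
      linarith
  -- the fixed point equation
  have hMinv : (L + γ • (1 : Matrix (Fin N) (Fin N) ℝ)) *
      (L + γ • (1 : Matrix (Fin N) (Fin N) ℝ))⁻¹ = 1 :=
    Matrix.mul_nonsing_inv _ hpd.det_pos.ne'.isUnit
  have hfix : (L + γ • (1 : Matrix (Fin N) (Fin N) ℝ)) *ᵥ xstar = Aᵀ.mulVec b + γ • x₀ := by
    rw [hxstar, Matrix.mulVec_mulVec, hMinv, Matrix.one_mulVec]
  have hfix' : L *ᵥ xstar + γ • xstar = Aᵀ.mulVec b + γ • x₀ := by
    rw [← hfix, Matrix.add_mulVec, Matrix.smul_mulVec, Matrix.one_mulVec]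
  have hQfix : Q.mulVec xstar + w = xstar := by
    funext i
    have h1i := congrFun hfix' i
    simp only [Pi.add_apply, Pi.smul_apply, smul_eq_mul] at h1i
    rw [hQ, hw]
    simp only [Matrix.sub_mulVec, Matrix.smul_mulVec, Matrix.one_mulVec,
      Pi.add_apply, Pi.sub_apply, Pi.smul_apply, smul_eq_mul]
    linear_combination (-τ) * h1i
  -- error recursion
  have herr : ∀ t, x (t + 1) - xstar = Q.mulVec (x t - xstar) := by
    intro t
    funext i
    have hq := congrFun hQfix i
    simp only [hx t, Matrix.mulVec_sub, Pi.add_apply, Pi.sub_apply] at hq ⊢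
    linarith
  -- key spectral-type bound : ‖Aᵀ u‖² ≤ 2 dmax ‖u‖²
  have key1 : ∀ u : Fin M → ℝ, ∑ i, (Aᵀ.mulVec u i) ^ 2 ≤ 2 * dmax * ∑ e, u e ^ 2 := by
    intro u
    have step : ∀ i, (Aᵀ.mulVec u i) ^ 2 ≤ (∑ e, A e i ^ 2) * ∑ e, A e i ^ 2 * u e ^ 2 := by
      intro i
      have hcs := Finset.sum_mul_sq_le_sq_mul_sq Finset.univ
        (fun e => |A e i|) (fun e => A e i * u e)
      have h1 : Aᵀ.mulVec u i = ∑ e, |A e i| * (A e i * u e) := by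
        simp only [Matrix.mulVec, dotProduct, Matrix.transpose_apply]
        exact Finset.sum_congr rfl fun e _ => by rw [← mul_assoc, hA01]
      rw [h1]
      calc (∑ e, |A e i| * (A e i * u e)) ^ 2
          ≤ (∑ e, |A e i| ^ 2) * ∑ e, (A e i * u e) ^ 2 := hcs
        _ = (∑ e, A e i ^ 2) * ∑ e, A e i ^ 2 * u e ^ 2 := by
            simp only [sq_abs, mul_pow]
    calc ∑ i, (Aᵀ.mulVec u i) ^ 2
        ≤ ∑ i, dmax * ∑ e, A e i ^ 2 * u e ^ 2 := by
          refine Finset.sum_le_sum fun i _ => (step i).trans ?_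
          refine mul_le_mul_of_nonneg_right (hLd i) ?_
          positivity
      _ = 2 * dmax * ∑ e, u e ^ 2 := by
          simp only [Finset.mul_sum]
          rw [Finset.sum_comm]
          refine Finset.sum_congr rfl fun e _ => ?_
          have h1 : ∑ i, dmax * (A e i ^ 2 * u e ^ 2) = (∑ i, A e i ^ 2) * (dmax * u e ^ 2) := by
            rw [Finset.sum_mul]
            exact Finset.sum_congr rfl fun i _ => by ring
          rw [h1, hrow e]; ring
  -- the quadratic form of L
  have key2 : ∀ v : Fin N → ℝ, v ⬝ᵥ (L *ᵥ v) = (A *ᵥ v) ⬝ᵥ (A *ᵥ v) := by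
    intro v
    rw [hL, ← Matrix.mulVec_mulVec, Matrix.dotProduct_mulVec, Matrix.vecMul_transpose]
  -- contraction of Q
  have contr : ∀ v : Fin N → ℝ,
      ∑ i, (Q.mulVec v i) ^ 2 ≤ (1 - τ * γ) ^ 2 * ∑ i, v i ^ 2 := by
    intro v
    set u := A *ᵥ v with hu
    have hLv : L *ᵥ v = Aᵀ *ᵥ u := by rw [hL, ← Matrix.mulVec_mulVec]
    have hQv : ∀ i, Q.mulVec v i = (1 - τ * γ) * v i - τ * (Aᵀ *ᵥ u) i := by
      intro i
      rw [hQ]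
      simp only [Matrix.sub_mulVec, Matrix.smul_mulVec, Matrix.one_mulVec,
        Pi.sub_apply, Pi.smul_apply, smul_eq_mul, hLv]
    have hvc : ∑ i, v i * (Aᵀ *ᵥ u) i = ∑ e, u e ^ 2 := by
      have h := key2 v
      rw [hLv] at h
      simpa [dotProduct, sq] using h
    have expand : ∑ i, (Q.mulVec v i) ^ 2
        = (1 - τ * γ) ^ 2 * (∑ i, v i ^ 2)
          - 2 * τ * (1 - τ * γ) * (∑ i, v i * (Aᵀ *ᵥ u) i)
          + τ ^ 2 * ∑ i, ((Aᵀ *ᵥ u) i) ^ 2 := by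
      simp only [hQv]
      rw [Finset.mul_sum, Finset.mul_sum, Finset.mul_sum, ← Finset.sum_sub_distrib,
        ← Finset.sum_add_distrib]
      exact Finset.sum_congr rfl fun i _ => by ring
    have hS : 0 ≤ ∑ e, u e ^ 2 := by positivity
    have h1 : τ ^ 2 * ∑ i, ((Aᵀ *ᵥ u) i) ^ 2 ≤ τ ^ 2 * (2 * dmax * ∑ e, u e ^ 2) :=
      mul_le_mul_of_nonneg_left (key1 u) (by positivity)
    have h3 : 0 ≤ τ * (∑ e, u e ^ 2) * ((1 - τ * γ) - τ * dmax) :=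
      mul_nonneg (mul_nonneg hτ.le hS) (by linarith)
    rw [expand, hvc]
    nlinarith [h1, h3]
  -- one-step norm contraction
  have step : ∀ t, Real.sqrt (∑ i, (x (t + 1) i - xstar i) ^ 2) ≤
      (1 - τ * γ) * Real.sqrt (∑ i, (x t i - xstar i) ^ 2) := by
    intro t
    have he : ∀ i, x (t + 1) i - xstar i = Q.mulVec (x t - xstar) i := by
      intro i
      have := congrFun (herr t) i
      simpa using this
    have h := contr (x t - xstar)
    calc Real.sqrt (∑ i, (x (t + 1) i - xstar i) ^ 2)
        = Real.sqrt (∑ i, (Q.mulVec (x t - xstar) i) ^ 2) := by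
          congr 1; exact Finset.sum_congr rfl fun i _ => by rw [he i]
      _ ≤ Real.sqrt ((1 - τ * γ) ^ 2 * ∑ i, (x t - xstar) i ^ 2) := Real.sqrt_le_sqrt h
      _ = (1 - τ * γ) * Real.sqrt (∑ i, (x t i - xstar i) ^ 2) := by
          rw [Real.sqrt_mul (sq_nonneg _), Real.sqrt_sq h1τγ]
          simp [Pi.sub_apply]
  intro t
  induction t with
  | zero => simp [hx0]
  | succ t ih =>
    calc Real.sqrt (∑ i, (x (t + 1) i - xstar i) ^ 2)
        ≤ (1 - τ * γ) * Real.sqrt (∑ i, (x t i - xstar i) ^ 2) := step t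
      _ ≤ (1 - τ * γ) * ((1 - τ * γ) ^ t * Real.sqrt (∑ i, (x₀ i - xstar i) ^ 2)) :=
          mul_le_mul_of_nonneg_left ih h1τγ
      _ = (1 - τ * γ) ^ (t + 1) * Real.sqrt (∑ i, (x₀ i - xstar i) ^ 2) := by ring
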